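/- In any DAG G, each vertex is the head of at most one covered edge: if u→x and v→x are both covered edges of G, then u = v. -/
import Mathlib


/-- A directed graph (given by its edge relation) is a DAG if it has no directed cycles. -/
def IsDAG {V : Type*} (E : V → V → Prop) : Prop :=
  ∀ v : V, ¬ Relation.TransGen E v v

/-- The set of parents of `v` in the directed graph `E`. -/
def parents {V : Type*} (E : V → V → Prop) (v : V) : Set V := {u | E u v}

/-- An arc `x → y` of `E` is a covered edge if `Pa(x) = Pa(y) \ {x}`. -/
def CoveredEdge {V : Type*} (E : V → V → Prop) (x y : V) : Prop :=
  E x y ∧ parents E x = parents E y \ {x}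

/-- The set of covered edges of `E`, as ordered pairs. -/
def coveredEdges {V : Type*} (E : V → V → Prop) : Set (V × V) :=
  {p | CoveredEdge E p.1 p.2}

/-- The skeleton (undirected adjacency) of a directed graph. -/
def Skel {V : Type*} (E : V → V → Prop) (u v : V) : Prop := E u v ∨ E v u

/-- `(u, v, w)` is a v-structure: `u → v ← w` with `u ≠ w` non-adjacent. -/
def VStruct {V : Type*} (E : V → V → Prop) (u v w : V) : Prop :=
  u ≠ w ∧ E u v ∧ E w v ∧ ¬ Skel E u w

/-- Two directed graphs are Markov equivalent: same skeleton and same v-structures. -/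
def MarkovEquiv {V : Type*} (E E' : V → V → Prop) : Prop :=
  (∀ u v, Skel E u v ↔ Skel E' u v) ∧ (∀ u v w, VStruct E u v w ↔ VStruct E' u v w)

/-- Minimum vertex cover number of a set of (directed) edges. -/
noncomputable def mvc {V : Type*} [Fintype V] (F : Set (V × V)) : ℕ :=
  sInf {n | ∃ S : Finset V, (∀ p ∈ F, p.1 ∈ S ∨ p.2 ∈ S) ∧ S.card = n}

/-- The graph obtained from `E` by reversing the arc `x → y` to `y → x`. -/
def reverseEdge {V : Type*} (E : V → V → Prop) (x y : V) : V → V → Prop :=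
  fun u v => (E u v ∧ ¬(u = x ∧ v = y)) ∨ (u = y ∧ v = x)

/-- A moral DAG is a DAG with no v-structures. -/
def Moral {V : Type*} (E : V → V → Prop) : Prop := ∀ u v w, ¬ VStruct E u v w

/-- `w` is a direct child of `v`: `v → w` is an arc and there is no directed
path from `v` to `w` of length at least 2 (i.e. through an intermediate vertex). -/
def DirectChild {V : Type*} (E : V → V → Prop) (v w : V) : Prop :=
  E v w ∧ ∀ z : V, ¬ (Relation.TransGen E v z ∧ Relation.TransGen E z w)


/-- In a DAG, each vertex is the head of at most one covered edge. -/
theorem coveredEdge_head_unique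
    {V : Type*} (E : V → V → Prop) (u v x : V)
    (hE : IsDAG E) (hux : CoveredEdge E u x) (hvx : CoveredEdge E v x) :
    u = v := by
  by_contra h
  obtain ⟨heu, hpu⟩ := hux
  obtain ⟨hev, hpv⟩ := hvx
  have hvu : E v u := by
    have : v ∈ parents E u := by
      rw [hpu]; exact ⟨hev, fun hc => h (hc.symm)⟩
    exact this
  have huv : E u v := by
    have : u ∈ parents E v := by
      rw [hpv]; exact ⟨heu, h⟩
    exact this
  exact hE u (Relation.TransGen.head huv (Relation.TransGen.single hvu))
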